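/- Gaussian smoothing gradient bound: if g has L-Lipschitz gradient, then for every θ, ||∇g_β(θ) − ∇g(θ)|| ≤ (βL/2)·(d+3)^{3/2}, where g_β is the Gaussian smoothing with parameter β. -/

import Mathlib

open MeasureTheory ProbabilityTheory RealInnerProductSpace

/-- The standard Gaussian measure on `EuclideanSpace ℝ (Fin d)`. -/
noncomputable def stdGaussian (d : ℕ) : Measure (EuclideanSpace ℝ (Fin d)) :=
  (Measure.pi fun _ : Fin d => gaussianReal 0 1).map
    (EuclideanSpace.equiv (Fin d) ℝ).symm

/-- Gaussian smoothing `g_β(θ) = E_u[g(θ + βu)]`. -/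
noncomputable def gaussSmooth {d : ℕ} (g : EuclideanSpace ℝ (Fin d) → ℝ) (β : ℝ)
    (θ : EuclideanSpace ℝ (Fin d)) : ℝ :=
  ∫ u, g (θ + β • u) ∂(stdGaussian d)

open Filter Real Topology Asymptotics
open scoped ENNReal NNReal

private lemma tendsto_xexp_atTop : Tendsto (fun x : ℝ => x * rexp (-x^2/2)) atTop (𝓝 0) := by
  have h : Tendsto (fun x : ℝ => x ^ 1 * rexp (-x)) atTop (𝓝 0) :=
    Real.tendsto_pow_mul_exp_neg_atTop_nhds_zero 1
  refine squeeze_zero' ?_ ?_ h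
  · filter_upwards [eventually_ge_atTop (0:ℝ)] with x hx
    positivity
  · filter_upwards [eventually_ge_atTop (2:ℝ)] with x hx
    have h1 : -x^2/2 ≤ -x := by nlinarith
    have h2 := Real.exp_le_exp.mpr h1
    have hx0 : (0:ℝ) ≤ x := by linarith
    calc x * rexp (-x^2/2) ≤ x * rexp (-x) := mul_le_mul_of_nonneg_left h2 hx0
      _ = x ^ 1 * rexp (-x) := by ring

private lemma tendsto_negxexp_atTop :
    Tendsto (fun x : ℝ => -x * rexp (-x^2/2)) atTop (𝓝 0) := by
  have := tendsto_xexp_atTop.neg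
  simpa [neg_mul] using this

private lemma tendsto_negxexp_atBot :
    Tendsto (fun x : ℝ => -x * rexp (-x^2/2)) atBot (𝓝 0) := by
  have h := tendsto_xexp_atTop.comp tendsto_neg_atBot_atTop
  have heq : ((fun x : ℝ => x * rexp (-x^2/2)) ∘ (fun x : ℝ => -x))
      = fun x : ℝ => -x * rexp (-x^2/2) := by
    funext x; simp [Function.comp, neg_sq]
  rwa [heq] at h

private lemma integrable_exp_half : Integrable (fun x : ℝ => rexp (-x^2/2)) := by
  have h := integrable_exp_neg_mul_sq (by norm_num : (0:ℝ) < 1/2)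
  have he : (fun x : ℝ => rexp (-x^2/2)) = fun x : ℝ => rexp (-(1/2) * x^2) := by
    funext x; congr 1; ring
  rw [he]; exact h

private lemma integrable_sq_exp_half : Integrable (fun x : ℝ => x^2 * rexp (-x^2/2)) := by
  have h := integrable_rpow_mul_exp_neg_mul_sq (by norm_num : (0:ℝ) < 1/2)
    (s := 2) (by norm_num)
  have he : (fun x : ℝ => x^2 * rexp (-x^2/2))
      = fun x : ℝ => x ^ (2:ℝ) * rexp (-(1/2) * x^2) := by
    funext x
    rw [show (2:ℝ) = ((2:ℕ):ℝ) by norm_num, Real.rpow_natCast]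
    congr 1; ring
  rw [he]; exact h

private lemma integral_sq_exp_half : ∫ x : ℝ, x^2 * rexp (-x^2/2) = Real.sqrt (2*π) := by
  have hderiv : ∀ x : ℝ, HasDerivAt (fun y : ℝ => -y * rexp (-y^2/2))
      ((x^2 - 1) * rexp (-x^2/2)) x := by
    intro x
    have h1 : HasDerivAt (fun y : ℝ => -y^2/2) (-x) x := by
      have := ((hasDerivAt_pow 2 x).neg).div_const 2
      exact this.congr_deriv (by norm_num; ring)
    have h2 : HasDerivAt (fun y : ℝ => rexp (-y^2/2)) (rexp (-x^2/2) * (-x)) x := h1.exp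
    have h3 : HasDerivAt (fun y : ℝ => -y) (-1 : ℝ) x := (hasDerivAt_id x).neg
    have := h3.mul h2
    exact this.congr_deriv (by ring)
  have hint : Integrable (fun x : ℝ => (x^2 - 1) * rexp (-x^2/2)) := by
    have h := integrable_sq_exp_half.sub integrable_exp_half
    have he : (fun x : ℝ => (x^2 - 1) * rexp (-x^2/2))
        = fun x : ℝ => x^2 * rexp (-x^2/2) - rexp (-x^2/2) := by
      funext x; ring
    rw [he]; exact h
  have h0 := integral_of_hasDerivAt_of_tendsto hderiv hint tendsto_negxexp_atBot
    tendsto_negxexp_atTop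
  have h1 : ∫ x : ℝ, rexp (-x^2/2) = Real.sqrt (2*π) := by
    have h := integral_gaussian (1/2)
    rw [show π / (1/2 : ℝ) = 2 * π by ring] at h
    have he : (fun x : ℝ => rexp (-x^2/2)) = fun x : ℝ => rexp (-(1/2) * x^2) := by
      funext x; congr 1; ring
    rw [he]; exact h
  have h3 : ∫ x : ℝ, ((x^2 - 1) * rexp (-x^2/2)) = 0 := by rw [h0]; ring
  have h4 : ∫ x : ℝ, (x^2 * rexp (-x^2/2) - rexp (-x^2/2)) = 0 := by
    have he : (fun x : ℝ => (x^2 - 1) * rexp (-x^2/2))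
        = fun x : ℝ => x^2 * rexp (-x^2/2) - rexp (-x^2/2) := by
      funext x; ring
    rw [← he]; exact h3
  rw [integral_sub integrable_sq_exp_half integrable_exp_half] at h4
  linarith

private lemma gaussianReal_std_eq :
    gaussianReal 0 1 = (volume : Measure ℝ).withDensity
      (fun x => ENNReal.ofReal ((Real.sqrt (2*π))⁻¹ * rexp (-x^2/2))) := by
  rw [gaussianReal_of_var_ne_zero 0 one_ne_zero]
  congr 1
  funext x
  simp [gaussianPDF, gaussianPDFReal]

private lemma meas_dens : Measurable fun x : ℝ => ((Real.sqrt (2*π))⁻¹ * rexp (-x^2/2)) := by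
  fun_prop

private lemma integrable_sq_gaussianReal : Integrable (fun x : ℝ => x^2) (gaussianReal 0 1) := by
  rw [gaussianReal_std_eq]
  rw [integrable_withDensity_iff (by fun_prop) (ae_of_all _ fun x => ENNReal.ofReal_lt_top)]
  have he : (fun x : ℝ => x^2 * (ENNReal.ofReal ((Real.sqrt (2*π))⁻¹ * rexp (-x^2/2))).toReal)
      = fun x : ℝ => (Real.sqrt (2*π))⁻¹ * (x^2 * rexp (-x^2/2)) := by
    funext x
    rw [ENNReal.toReal_ofReal (by positivity)]
    ring
  rw [he]
  exact integrable_sq_exp_half.const_mul _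

private lemma integral_sq_gaussianReal : ∫ x, x^2 ∂(gaussianReal 0 1) = 1 := by
  rw [gaussianReal_std_eq]
  have hm : Measurable fun x : ℝ => ((Real.sqrt (2*π))⁻¹ * rexp (-x^2/2)).toNNReal :=
    meas_dens.real_toNNReal
  have hrw : (fun x : ℝ => ENNReal.ofReal ((Real.sqrt (2*π))⁻¹ * rexp (-x^2/2)))
      = (fun x : ℝ => (((Real.sqrt (2*π))⁻¹ * rexp (-x^2/2)).toNNReal : ℝ≥0∞)) := rfl
  rw [hrw]
  rw [integral_withDensity_eq_integral_smul hm]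
  have he : (fun x : ℝ => (((Real.sqrt (2*π))⁻¹ * rexp (-x^2/2)).toNNReal : ℝ≥0) • x^2)
      = fun x : ℝ => (Real.sqrt (2*π))⁻¹ * (x^2 * rexp (-x^2/2)) := by
    funext x
    rw [NNReal.smul_def, Real.coe_toNNReal _ (by positivity), smul_eq_mul]
    ring
  rw [he, integral_const_mul, integral_sq_exp_half]
  have hpos : (0:ℝ) < Real.sqrt (2*π) := Real.sqrt_pos.mpr (by positivity)
  field_simp

private lemma map_eval_piG {d : ℕ} (i : Fin d) :
    (Measure.pi fun _ : Fin d => gaussianReal 0 1).map (fun x => x i) = gaussianReal 0 1 := by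
  ext s hs
  rw [Measure.map_apply (measurable_pi_apply i) hs]
  have hpre : (fun x : Fin d → ℝ => x i) ⁻¹' s
      = Set.pi Set.univ (Function.update (fun _ : Fin d => (Set.univ : Set ℝ)) i s) := by
    ext x
    simp only [Set.mem_preimage, Set.mem_univ_pi]
    constructor
    · intro h j
      rcases eq_or_ne j i with rfl | hj
      · simpa using h
      · simp [Function.update_of_ne hj]
    · intro h
      have := h i
      simpa using this
  rw [hpre, Measure.pi_pi]
  rw [Finset.prod_eq_single i (fun j _ hj => by simp [Function.update_of_ne hj])
    (fun h => absurd (Finset.mem_univ i) h)]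
  simp

private lemma integrable_eval_sq {d : ℕ} (i : Fin d) :
    Integrable (fun x : Fin d → ℝ => (x i)^2)
      (Measure.pi fun _ : Fin d => gaussianReal 0 1) := by
  have h := integrable_sq_gaussianReal
  rw [← map_eval_piG i] at h
  exact (integrable_map_measure (continuous_pow 2).aestronglyMeasurable (measurable_pi_apply i).aemeasurable).mp h

private lemma integral_eval_sq {d : ℕ} (i : Fin d) :
    ∫ x, (x i)^2 ∂(Measure.pi fun _ : Fin d => gaussianReal 0 1) = 1 := by
  have h := integral_map (μ := Measure.pi fun _ : Fin d => gaussianReal 0 1)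
    (φ := fun x => x i) (measurable_pi_apply i).aemeasurable
    (f := fun y : ℝ => y^2) (continuous_pow 2).aestronglyMeasurable
  rw [map_eval_piG i] at h
  rw [← h, integral_sq_gaussianReal]

private lemma stdGaussian_eq (d : ℕ) :
    stdGaussian d = (Measure.pi fun _ : Fin d => gaussianReal 0 1).map
      (MeasurableEquiv.toLp 2 (Fin d → ℝ)) := rfl

instance stdGaussian_prob (d : ℕ) : IsProbabilityMeasure (stdGaussian d) := by
  rw [stdGaussian_eq]
  exact Measure.isProbabilityMeasure_map
    (MeasurableEquiv.toLp 2 (Fin d → ℝ)).measurable.aemeasurable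

private lemma norm_sq_coords {d : ℕ} (x : Fin d → ℝ) :
    ‖(MeasurableEquiv.toLp 2 (Fin d → ℝ)) x‖^2 = ∑ i, (x i)^2 := by
  rw [EuclideanSpace.norm_eq, Real.sq_sqrt (by positivity)]
  simp [Real.norm_eq_abs, sq_abs]

private lemma integrable_norm_sq_stdGaussian (d : ℕ) :
    Integrable (fun u => ‖u‖^2) (stdGaussian d) := by
  rw [stdGaussian_eq, integrable_map_equiv]
  have : ((fun u : EuclideanSpace ℝ (Fin d) => ‖u‖^2) ∘
        (MeasurableEquiv.toLp 2 (Fin d → ℝ)))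
      = fun x : Fin d → ℝ => ∑ i, (x i)^2 := by
    funext x; exact norm_sq_coords x
  rw [this]
  exact integrable_finset_sum _ (fun i _ => integrable_eval_sq i)

private lemma integral_norm_sq_stdGaussian (d : ℕ) :
    ∫ u, ‖u‖^2 ∂(stdGaussian d) = d := by
  rw [stdGaussian_eq, integral_map_equiv]
  have : (fun x : Fin d → ℝ =>
        ‖(MeasurableEquiv.toLp 2 (Fin d → ℝ)) x‖^2)
      = fun x : Fin d → ℝ => ∑ i, (x i)^2 := by
    funext x; exact norm_sq_coords x
  rw [this, integral_finset_sum _ (fun i _ => integrable_eval_sq i)]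
  simp [integral_eval_sq]

private lemma integrable_norm_stdGaussian (d : ℕ) :
    Integrable (fun u => ‖u‖) (stdGaussian d) := by
  have hb : Integrable (fun u : EuclideanSpace ℝ (Fin d) => (1 + ‖u‖^2)/2) (stdGaussian d) :=
    ((integrable_const 1).add (integrable_norm_sq_stdGaussian d)).div_const 2
  refine hb.mono (by fun_prop) (ae_of_all _ fun u => ?_)
  rw [Real.norm_eq_abs, abs_of_nonneg (norm_nonneg u), Real.norm_eq_abs,
    abs_of_nonneg (by positivity)]
  nlinarith [norm_nonneg u, sq_nonneg (‖u‖ - 1)]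

private lemma integral_norm_stdGaussian_le (d : ℕ) :
    ∫ u, ‖u‖ ∂(stdGaussian d) ≤ (1 + (d:ℝ))/2 := by
  have hb : Integrable (fun u : EuclideanSpace ℝ (Fin d) => (1 + ‖u‖^2)/2) (stdGaussian d) :=
    ((integrable_const 1).add (integrable_norm_sq_stdGaussian d)).div_const 2
  have h1 : ∫ u, ‖u‖ ∂(stdGaussian d) ≤ ∫ u, (1 + ‖u‖^2)/2 ∂(stdGaussian d) := by
    refine integral_mono (integrable_norm_stdGaussian d) hb (fun u => ?_)
    nlinarith [sq_nonneg (‖u‖ - 1)]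
  have h2 : ∫ u, (1 + ‖u‖^2)/2 ∂(stdGaussian d) = (1 + (d:ℝ))/2 := by
    rw [integral_div, integral_add (integrable_const 1) (integrable_norm_sq_stdGaussian d),
      integral_norm_sq_stdGaussian, integral_const]
    simp
  linarith

section analytic
variable {E : Type*} [NormedAddCommGroup E] [InnerProductSpace ℝ E] [CompleteSpace E]
variable {g : E → ℝ} {g' : E → E} {L : ℝ}

private lemma descent (hL : 0 ≤ L) (hg : ∀ x, HasGradientAt g (g' x) x)
    (hlip : ∀ x y, ‖g' x - g' y‖ ≤ L * ‖x - y‖) (x y : E) :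
    |g y - g x - ⟪g' x, y - x⟫| ≤ L * ‖y - x‖ * ‖y - x‖ := by
  have key := (convex_segment x y).norm_image_sub_le_of_norm_hasFDerivWithin_le'
    (f := g) (f' := fun z => (InnerProductSpace.toDual ℝ E) (g' z))
    (φ := (InnerProductSpace.toDual ℝ E) (g' x)) (C := L * ‖y - x‖)
    (fun z _ => (hg z).hasFDerivAt.hasFDerivWithinAt)
    (fun z hz => ?_) (left_mem_segment ℝ x y) (right_mem_segment ℝ x y)
  · rw [Real.norm_eq_abs] at key
    calc |g y - g x - ⟪g' x, y - x⟫|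
        = |g y - g x - (InnerProductSpace.toDual ℝ E) (g' x) (y - x)| := by
          rw [InnerProductSpace.toDual_apply_apply]
      _ ≤ L * ‖y - x‖ * ‖y - x‖ := key
  · rw [← map_sub, LinearIsometryEquiv.norm_map]
    obtain ⟨a, b, ha, hb, hab, rfl⟩ := hz
    have hzx : a • x + b • y - x = b • (y - x) := by
      have ha' : a = 1 - b := by linarith
      rw [ha']; module
    calc ‖g' (a • x + b • y) - g' x‖ ≤ L * ‖a • x + b • y - x‖ := hlip _ _
      _ = L * (b * ‖y - x‖) := by rw [hzx, norm_smul, Real.norm_eq_abs, abs_of_nonneg hb]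
      _ ≤ L * (1 * ‖y - x‖) := by
          apply mul_le_mul_of_nonneg_left _ hL
          apply mul_le_mul_of_nonneg_right _ (norm_nonneg _)
          linarith
      _ = L * ‖y - x‖ := by ring

end analytic

section main
variable {d : ℕ}
local notation "E" => EuclideanSpace ℝ (Fin d)

private lemma lipschitz_g' {g' : E → E} {L : ℝ}
    (hlip : ∀ x y, ‖g' x - g' y‖ ≤ L * ‖x - y‖) : Continuous g' := by
  have : LipschitzWith (Real.toNNReal L) g' := by
    refine LipschitzWith.of_dist_le_mul fun x y => ?_
    rw [dist_eq_norm, dist_eq_norm]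
    refine (hlip x y).trans ?_
    apply mul_le_mul_of_nonneg_right _ (norm_nonneg _)
    exact Real.le_coe_toNNReal L
  exact this.continuous

private lemma integrable_g'_shift {g' : E → E} {L β : ℝ}
    (hL : 0 ≤ L) (hβ : 0 < β)
    (hlip : ∀ x y, ‖g' x - g' y‖ ≤ L * ‖x - y‖) (θ : E) :
    Integrable (fun u : E => g' (θ + β • u)) (stdGaussian d) := by
  have hcont : Continuous fun u : E => g' (θ + β • u) :=
    (lipschitz_g' hlip).comp (continuous_const.add (continuous_id.const_smul β))
  have hbound : Integrable (fun u : E => ‖g' θ‖ + L * β * ‖u‖) (stdGaussian d) :=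
    (integrable_const _).add ((integrable_norm_stdGaussian d).const_mul _)
  refine hbound.mono hcont.aestronglyMeasurable (ae_of_all _ fun u => ?_)
  have h1 : ‖g' (θ + β • u) - g' θ‖ ≤ L * β * ‖u‖ := by
    have := hlip (θ + β • u) θ
    simpa [norm_smul, abs_of_pos hβ, mul_assoc] using this
  have h2 : ‖g' (θ + β • u)‖ ≤ ‖g' θ‖ + L * β * ‖u‖ := by
    have := norm_sub_norm_le (g' (θ + β • u)) (g' θ)
    linarith
  refine h2.trans (le_abs_self _)

private lemma integrable_g_shift {g : E → ℝ} {g' : E → E} {L β : ℝ}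
    (hL : 0 ≤ L) (hβ : 0 < β)
    (hg : ∀ x, HasGradientAt g (g' x) x)
    (hlip : ∀ x y, ‖g' x - g' y‖ ≤ L * ‖x - y‖) (θ : E) :
    Integrable (fun u : E => g (θ + β • u)) (stdGaussian d) := by
  have hcontg : Continuous g := by
    rw [continuous_iff_continuousAt]
    exact fun x => (hg x).continuousAt
  have hcont : Continuous fun u : E => g (θ + β • u) :=
    hcontg.comp (continuous_const.add (continuous_id.const_smul β))
  have hbound : Integrable
      (fun u : E => |g θ| + ‖g' θ‖ * β * ‖u‖ + L * β^2 * ‖u‖^2) (stdGaussian d) :=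
    (((integrable_const _).add ((integrable_norm_stdGaussian d).const_mul _))).add
      ((integrable_norm_sq_stdGaussian d).const_mul _)
  refine hbound.mono hcont.aestronglyMeasurable (ae_of_all _ fun u => ?_)
  have hd := descent hL hg hlip θ (θ + β • u)
  have hsub : θ + β • u - θ = β • u := by abel
  rw [hsub] at hd
  have hip : |⟪g' θ, β • u⟫| ≤ ‖g' θ‖ * β * ‖u‖ := by
    refine (abs_real_inner_le_norm _ _).trans ?_
    rw [norm_smul, Real.norm_eq_abs, abs_of_pos hβ]
    ring_nf; rfl
  have hns : ‖β • u‖ = β * ‖u‖ := by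
    rw [norm_smul, Real.norm_eq_abs, abs_of_pos hβ]
  rw [hns] at hd
  have h1 : |g (θ + β • u)| ≤ |g θ| + ‖g' θ‖ * β * ‖u‖ + L * β^2 * ‖u‖^2 := by
    have := abs_sub_abs_le_abs_sub (g (θ + β • u)) (g θ)
    have h3 : |g (θ + β • u) - g θ| ≤ |⟪g' θ, β • u⟫| + L * (β * ‖u‖) * (β * ‖u‖) := by
      have h4 := abs_sub_abs_le_abs_sub (g (θ + β • u) - g θ) (⟪g' θ, β • u⟫)
      have h5 : |g (θ + β • u) - g θ - ⟪g' θ, β • u⟫| ≤ L * (β * ‖u‖) * (β * ‖u‖) := hd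
      calc |g (θ + β • u) - g θ| ≤ |g (θ + β • u) - g θ - ⟪g' θ, β • u⟫| + |⟪g' θ, β • u⟫| := by
            have := abs_add_le (g (θ + β • u) - g θ - ⟪g' θ, β • u⟫) (⟪g' θ, β • u⟫)
            simpa using this
        _ ≤ |⟪g' θ, β • u⟫| + L * (β * ‖u‖) * (β * ‖u‖) := by linarith
    nlinarith [hip, sq_nonneg (‖u‖), sq_nonneg β]
  refine h1.trans (le_abs_self _)
end main

section main
variable {d : ℕ}
local notation "E" => EuclideanSpace ℝ (Fin d)

private lemma hasGradient_gaussSmooth {g : E → ℝ} {g' : E → E} {L β : ℝ}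
    (hL : 0 ≤ L) (hβ : 0 < β)
    (hg : ∀ x, HasGradientAt g (g' x) x)
    (hlip : ∀ x y, ‖g' x - g' y‖ ≤ L * ‖x - y‖) (θ : E) :
    HasGradientAt (gaussSmooth g β) (∫ u, g' (θ + β • u) ∂(stdGaussian d)) θ := by
  set G := ∫ u, g' (θ + β • u) ∂(stdGaussian d) with hG
  rw [hasGradientAt_iff_hasFDerivAt, hasFDerivAt_iff_isLittleO_nhds_zero]
  have key : ∀ h : E, ‖gaussSmooth g β (θ + h) - gaussSmooth g β θ
      - (InnerProductSpace.toDual ℝ _) G h‖ ≤ L * ‖h‖ * ‖h‖ := by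
    intro h
    have hint1 : Integrable (fun u : E => g (θ + h + β • u)) (stdGaussian d) :=
      integrable_g_shift hL hβ hg hlip (θ + h)
    have hint2 : Integrable (fun u : E => g (θ + β • u)) (stdGaussian d) :=
      integrable_g_shift hL hβ hg hlip θ
    have hintg' : Integrable (fun u : E => g' (θ + β • u)) (stdGaussian d) :=
      integrable_g'_shift hL hβ hlip θ
    have hint3 : Integrable (fun u : E => (⟪g' (θ + β • u), h⟫ : ℝ)) (stdGaussian d) := by
      have h1 := (innerSL ℝ h).integrable_comp hintg'
      have h2 : (fun u : E => (innerSL ℝ h) (g' (θ + β • u)))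
          = fun u : E => (⟪g' (θ + β • u), h⟫ : ℝ) := by
        funext u
        simp only [innerSL_apply_apply]
        exact real_inner_comm _ _
      rwa [h2] at h1
    have hdual : (InnerProductSpace.toDual ℝ _) G h
        = ∫ u, (⟪g' (θ + β • u), h⟫ : ℝ) ∂(stdGaussian d) := by
      rw [InnerProductSpace.toDual_apply_apply, hG, real_inner_comm,
        ← integral_inner hintg' h]
      simp_rw [real_inner_comm]
    have heq : gaussSmooth g β (θ + h) - gaussSmooth g β θ
          - (InnerProductSpace.toDual ℝ _) G h
        = ∫ u, (g (θ + h + β • u) - g (θ + β • u) - ⟪g' (θ + β • u), h⟫)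
            ∂(stdGaussian d) := by
      have hint12 : Integrable (fun u : E => g (θ + h + β • u) - g (θ + β • u))
          (stdGaussian d) := hint1.sub hint2
      rw [integral_sub hint12 hint3, integral_sub hint1 hint2, hdual]
      rfl
    rw [heq]
    have hbd : ∀ u : E, ‖g (θ + h + β • u) - g (θ + β • u) - ⟪g' (θ + β • u), h⟫‖
        ≤ L * ‖h‖ * ‖h‖ := by
      intro u
      have hd := descent hL hg hlip (θ + β • u) (θ + h + β • u)
      have hs : θ + h + β • u - (θ + β • u) = h := by abel
      rw [hs] at hd
      simpa [Real.norm_eq_abs] using hd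
    calc ‖∫ u, (g (θ + h + β • u) - g (θ + β • u) - ⟪g' (θ + β • u), h⟫)
            ∂(stdGaussian d)‖
        ≤ ∫ _u, (L * ‖h‖ * ‖h‖) ∂(stdGaussian d) :=
          norm_integral_le_of_norm_le (integrable_const _) (ae_of_all _ hbd)
      _ = L * ‖h‖ * ‖h‖ := by simp
  rw [isLittleO_iff]
  intro c hc
  have hpos : 0 < c / (L + 1) := by positivity
  filter_upwards [Metric.ball_mem_nhds (0 : E) hpos] with h hh
  rw [mem_ball_zero_iff] at hh
  have e1 : L * ‖h‖ * ‖h‖ ≤ L * (c/(L+1)) * ‖h‖ :=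
    mul_le_mul_of_nonneg_right (mul_le_mul_of_nonneg_left hh.le hL) (norm_nonneg h)
  have e2 : L * (c/(L+1)) ≤ c := by
    have hL1 : (0:ℝ) < L + 1 := by linarith
    rw [mul_comm, div_mul_eq_mul_div, div_le_iff₀ hL1]
    nlinarith
  have e3 : L * (c/(L+1)) * ‖h‖ ≤ c * ‖h‖ :=
    mul_le_mul_of_nonneg_right e2 (norm_nonneg h)
  calc ‖gaussSmooth g β (θ + h) - gaussSmooth g β θ - (InnerProductSpace.toDual ℝ _) G h‖
      ≤ L * ‖h‖ * ‖h‖ := key h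
    _ ≤ c * ‖h‖ := by linarith

/-- Gaussian smoothing gradient bound: if `g` has `L`-Lipschitz gradient,
then `‖∇g_β(θ) − ∇g(θ)‖ ≤ (βL/2)(d+3)^{3/2}`. -/
theorem gaussSmooth_gradient_close {d : ℕ}
    (g : EuclideanSpace ℝ (Fin d) → ℝ)
    (g' : EuclideanSpace ℝ (Fin d) → EuclideanSpace ℝ (Fin d)) (L β : ℝ)
    (hL : 0 ≤ L) (hβ : 0 < β)
    (hg : ∀ x, HasGradientAt g (g' x) x)
    (hlip : ∀ x y, ‖g' x - g' y‖ ≤ L * ‖x - y‖)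
    (θ : EuclideanSpace ℝ (Fin d)) :
    ‖gradient (gaussSmooth g β) θ - g' θ‖ ≤
      β * L / 2 * ((d : ℝ) + 3) ^ ((3 : ℝ) / 2) := by
  have hgrad := hasGradient_gaussSmooth hL hβ hg hlip θ
  rw [hgrad.gradient]
  have hconst : ∫ _u, g' θ ∂(stdGaussian d) = g' θ := by simp
  have hsplit : (∫ u, g' (θ + β • u) ∂(stdGaussian d)) - g' θ
      = ∫ u, (g' (θ + β • u) - g' θ) ∂(stdGaussian d) := by
    rw [integral_sub (integrable_g'_shift hL hβ hlip θ) (integrable_const _), hconst]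
  rw [hsplit]
  have hb1 : ‖∫ u, (g' (θ + β • u) - g' θ) ∂(stdGaussian d)‖
      ≤ ∫ u, L * β * ‖u‖ ∂(stdGaussian d) := by
    refine norm_integral_le_of_norm_le ((integrable_norm_stdGaussian d).const_mul _)
      (ae_of_all _ fun u => ?_)
    have := hlip (θ + β • u) θ
    simpa [add_sub_cancel_left, norm_smul, abs_of_pos hβ, mul_assoc] using this
  have hb2 : ∫ u, L * β * ‖u‖ ∂(stdGaussian d)
      = L * β * ∫ u, ‖u‖ ∂(stdGaussian d) := integral_const_mul _ _
  have hb3 := integral_norm_stdGaussian_le d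
  have hInorm : (0:ℝ) ≤ ∫ u, ‖u‖ ∂(stdGaussian d) :=
    integral_nonneg (fun u => norm_nonneg u)
  have hkey : (1 + (d:ℝ)) ≤ ((d:ℝ) + 3) ^ ((3:ℝ)/2) := by
    have h1 : ((d:ℝ) + 3) ^ (1:ℝ) ≤ ((d:ℝ) + 3) ^ ((3:ℝ)/2) := by
      refine Real.rpow_le_rpow_of_exponent_le ?_ (by norm_num)
      have : (0:ℝ) ≤ (d:ℝ) := Nat.cast_nonneg d
      linarith
    rw [Real.rpow_one] at h1
    have : (0:ℝ) ≤ (d:ℝ) := Nat.cast_nonneg d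
    linarith
  have hLβ : 0 ≤ L * β := mul_nonneg hL hβ.le
  calc ‖∫ u, (g' (θ + β • u) - g' θ) ∂(stdGaussian d)‖
      ≤ ∫ u, L * β * ‖u‖ ∂(stdGaussian d) := hb1
    _ = L * β * ∫ u, ‖u‖ ∂(stdGaussian d) := hb2
    _ ≤ L * β * ((1 + (d:ℝ))/2) := mul_le_mul_of_nonneg_left hb3 hLβ
    _ ≤ β * L / 2 * ((d : ℝ) + 3) ^ ((3 : ℝ) / 2) := by nlinarith
end main
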